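/- Let q ≥ 2 and m ≥ 1 be integers and let X be a random variable with values in [0,1) having a probability density function f. Suppose there are constants c_0, …, c_{q^m−1} such that f = c_j Lebesgue-almost everywhere on the interval [j·q^{−m}, (j+1)·q^{−m}) for each j = 0, 1, …, q^m − 1. Then for every n ≥ m, the integer random variable ⌊q^n X⌋ (which encodes the first n base-q digits of X) is independent of T^n(X), and T^n(X) is uniformly distributed on [0,1). -/

import Mathlib

open MeasureTheory Set

/-- The base-`q` map `T(x) = q·x − ⌊q·x⌋`. -/
noncomputable def T (q : ℕ) : ℝ → ℝ := fun x => Int.fract ((q : ℝ) * x)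

lemma T_fract (q : ℕ) (y : ℝ) : T q (Int.fract y) = Int.fract ((q : ℝ) * y) := by
  have h : (q : ℝ) * Int.fract y = (q : ℝ) * y - ((q * ⌊y⌋ : ℤ) : ℝ) := by
    rw [Int.fract]; push_cast; ring
  rw [T, h, Int.fract_sub_intCast]

lemma T_iterate (q n : ℕ) (y : ℝ) :
    (T q)^[n] (Int.fract y) = Int.fract ((q : ℝ) ^ n * y) := by
  induction n generalizing y with
  | zero => simp
  | succ n ih =>
    rw [Function.iterate_succ_apply, T_fract, ih]
    ring_nf

theorem stmt3
    {Ω : Type*} [MeasurableSpace Ω] (ℙ : Measure Ω) [IsProbabilityMeasure ℙ]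
    (q : ℕ) (hq : 2 ≤ q) (m : ℕ) (hm : 1 ≤ m)
    (f : ℝ → ℝ) (hf_meas : Measurable f) (hf_nonneg : ∀ x, 0 ≤ f x)
    (hf_supp : ∀ x, x ∉ Set.Ico (0:ℝ) 1 → f x = 0)
    (X : Ω → ℝ) (hX : Measurable X) (hXrange : ∀ ω, X ω ∈ Set.Ico (0:ℝ) 1)
    (hlaw : Measure.map X ℙ = volume.withDensity (fun x => ENNReal.ofReal (f x)))
    -- `f` is a.e. constant `c j` on each interval `[j·q^{-m}, (j+1)·q^{-m})`
    (c : ℕ → ℝ)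
    (hconst : ∀ j < q ^ m,
      ∀ᵐ x ∂(volume.restrict
        (Set.Ico ((j : ℝ) / (q : ℝ) ^ m) (((j : ℝ) + 1) / (q : ℝ) ^ m))), f x = c j)
    (n : ℕ) (hn : m ≤ n) :
    -- `⌊q^n X⌋` (the first `n` digits) is independent of `T^n(X)`, and
    -- `T^n(X)` is uniformly distributed on `[0,1)`
    ProbabilityTheory.IndepFun (fun ω => ⌊(q : ℝ) ^ n * X ω⌋)
        (fun ω => (T q)^[n] (X ω)) ℙ
      ∧ Measure.map (fun ω => (T q)^[n] (X ω)) ℙ = volume.restrict (Set.Ico (0:ℝ) 1) := by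
  classical
  have hq0 : (0:ℝ) < q := by positivity
  set N : ℝ := (q : ℝ) ^ n with hNdef
  have hN0 : (0:ℝ) < N := by positivity
  -- T^[n] (X ω) = fract (q^n * X ω)
  have hfract : (fun ω => (T q)^[n] (X ω)) = fun ω => Int.fract (N * X ω) := by
    funext ω
    have h1 : Int.fract (X ω) = X ω := Int.fract_eq_self.2 ⟨(hXrange ω).1, (hXrange ω).2⟩
    rw [← h1, T_iterate, h1]
  -- the affine map ψ k
  set ψ : ℤ → ℝ → ℝ := fun k x => N * x - (k : ℝ) with hψdef
  have hψmeas : ∀ k, Measurable (ψ k) := fun k =>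
    (measurable_const_mul N).sub measurable_const
  -- key set identity
  have hset : ∀ (k : ℤ) (t : Set ℝ) (x : ℝ),
      (⌊N * x⌋ = k ∧ Int.fract (N * x) ∈ t) ↔ ψ k x ∈ t ∩ Ico 0 1 := by
    intro k t x
    constructor
    · rintro ⟨hk, ht⟩
      have hf1 : Int.fract (N * x) = ψ k x := by
        rw [Int.fract, hk]
      exact ⟨hf1 ▸ ht, hf1 ▸ ⟨Int.fract_nonneg _, Int.fract_lt_one _⟩⟩
    · rintro ⟨ht, h0, h1⟩
      have hk : ⌊N * x⌋ = k := by
        rw [Int.floor_eq_iff]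
        constructor
        · simp only [hψdef, sub_nonneg] at h0; linarith
        · simp only [hψdef, sub_lt_iff_lt_add] at h1; push_cast; linarith
      have hf1 : Int.fract (N * x) = ψ k x := by rw [Int.fract, hk]
      exact ⟨hk, hf1 ▸ ht⟩
  -- volume of preimages under ψ
  have hvol : ∀ (k : ℤ) (S : Set ℝ),
      volume (ψ k ⁻¹' S) = ENNReal.ofReal (1 / N) * volume S := by
    intro k S
    have h1 : ψ k ⁻¹' S = (fun x => N * x) ⁻¹' ((fun y => y + (-(k:ℝ))) ⁻¹' S) := by
      ext x; simp [hψdef, sub_eq_add_neg]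
    rw [h1, Real.volume_preimage_mul_left (ne_of_gt hN0),
      measure_preimage_add_right volume _ S]
    congr 1
    rw [abs_of_pos (by positivity), one_div]
  -- law of X applied to measurable sets
  have hPX : ∀ B : Set ℝ, MeasurableSet B →
      ℙ (X ⁻¹' B) = ∫⁻ x in B, ENNReal.ofReal (f x) := by
    intro B hB
    rw [← Measure.map_apply hX hB, hlaw, withDensity_apply _ hB]
  -- events as preimages
  have hEk : ∀ k : ℤ, (fun ω => ⌊N * X ω⌋) ⁻¹' {k} = X ⁻¹' (ψ k ⁻¹' (Ico 0 1)) := by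
    intro k
    ext ω
    simp only [mem_preimage, mem_singleton_iff]
    constructor
    · intro h
      exact ((hset k univ (X ω)).1 ⟨h, trivial⟩).2
    · intro h
      exact ((hset k univ (X ω)).2 ⟨trivial, h⟩).1
  have hEkt : ∀ (k : ℤ) (t : Set ℝ),
      (fun ω => ⌊N * X ω⌋) ⁻¹' {k} ∩ (fun ω => Int.fract (N * X ω)) ⁻¹' t
        = X ⁻¹' (ψ k ⁻¹' (t ∩ Ico 0 1)) := by
    intro k t
    ext ω
    simp only [mem_inter_iff, mem_preimage, mem_singleton_iff]
    exact hset k t (X ω)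
  -- the key factorization
  have key : ∀ (k : ℤ) (t : Set ℝ), MeasurableSet t →
      ℙ ((fun ω => ⌊N * X ω⌋) ⁻¹' {k} ∩ (fun ω => Int.fract (N * X ω)) ⁻¹' t)
        = ℙ ((fun ω => ⌊N * X ω⌋) ⁻¹' {k}) * volume (t ∩ Ico 0 1) := by
    intro k t ht
    by_cases hk : 0 ≤ k ∧ k < (q : ℤ) ^ n
    · -- main case
      obtain ⟨hk0, hkN⟩ := hk
      set κ : ℕ := k.toNat with hκdef
      have hκk : (κ : ℤ) = k := Int.toNat_of_nonneg hk0
      have hκlt : κ < q ^ n := by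
        have h := hκk ▸ hkN
        exact_mod_cast h
      set d : ℕ := q ^ (n - m) with hddef
      have hd0 : 0 < d := by positivity
      set j : ℕ := κ / d with hjdef
      have hqnm : q ^ n = q ^ m * d := by
        rw [hddef, ← pow_add]; congr 1; omega
      have hjlt : j < q ^ m := by
        rw [hjdef, Nat.div_lt_iff_lt_mul hd0]
        calc κ < q ^ n := hκlt
        _ = q ^ m * d := hqnm
        _ ≤ q ^ m * d := le_refl _
      have hjd1 : j * d ≤ κ := Nat.div_mul_le_self κ d
      have hjd2 : κ < (j + 1) * d := by
        have h1 : d * j + κ % d = κ := Nat.div_add_mod κ d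
        have h2 : κ % d < d := Nat.mod_lt κ hd0
        nlinarith
      -- real-number versions
      have hQ1 : (0:ℝ) < (q:ℝ) ^ m := by positivity
      have hQ2 : (0:ℝ) < (d:ℝ) := by exact_mod_cast hd0
      have hNQ : N = (q:ℝ) ^ m * d := by
        rw [hNdef]
        exact_mod_cast congrArg (fun x : ℕ => (x : ℝ)) hqnm
      -- ψ k ⁻¹' Ico 0 1 ⊆ the m-level interval J j
      have hIJ : ψ k ⁻¹' (Ico 0 1) ⊆
          Ico ((j : ℝ) / (q : ℝ) ^ m) (((j : ℝ) + 1) / (q : ℝ) ^ m) := by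
        intro x hx
        simp only [mem_preimage, mem_Ico, hψdef, sub_nonneg, sub_lt_iff_lt_add] at hx
        obtain ⟨h0, h1⟩ := hx
        have hcast1 : ((j : ℝ)) * d ≤ (κ : ℝ) := by exact_mod_cast hjd1
        have hcast2 : (κ : ℝ) + 1 ≤ ((j : ℝ) + 1) * d := by
          have : κ + 1 ≤ (j + 1) * d := hjd2
          exact_mod_cast this
        have hkκ : (k : ℝ) = (κ : ℝ) := by exact_mod_cast hκk.symm
        rw [hkκ] at h0 h1
        rw [hNQ] at h0 h1
        constructor
        · rw [div_le_iff₀ hQ1]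
          nlinarith
        · rw [lt_div_iff₀ hQ1]
          nlinarith
      -- measure of X-preimage of ψ k ⁻¹' S for S ⊆ Ico 0 1
      have hB : ∀ S : Set ℝ, S ⊆ Ico 0 1 → MeasurableSet S →
          ℙ (X ⁻¹' (ψ k ⁻¹' S)) =
            ENNReal.ofReal (c j) * (ENNReal.ofReal (1 / N) * volume S) := by
        intro S hS hSm
        have hSm' : MeasurableSet (ψ k ⁻¹' S) := hψmeas k hSm
        rw [hPX _ hSm']
        have hsub : ψ k ⁻¹' S ⊆
            Ico ((j : ℝ) / (q : ℝ) ^ m) (((j : ℝ) + 1) / (q : ℝ) ^ m) :=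
          (preimage_mono hS).trans hIJ
        have hae : ∀ᵐ x ∂(volume.restrict (ψ k ⁻¹' S)), f x = c j :=
          ae_restrict_of_ae_restrict_of_subset hsub (hconst j hjlt)
        calc ∫⁻ x in ψ k ⁻¹' S, ENNReal.ofReal (f x)
            = ∫⁻ _ in ψ k ⁻¹' S, ENNReal.ofReal (c j) := by
              refine lintegral_congr_ae (hae.mono fun x hx => ?_)
              simp [hx]
          _ = ENNReal.ofReal (c j) * volume (ψ k ⁻¹' S) := setLIntegral_const _ _
          _ = ENNReal.ofReal (c j) * (ENNReal.ofReal (1 / N) * volume S) := by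
              rw [hvol]
      rw [hEkt, hEk, hB _ inter_subset_right (ht.inter measurableSet_Ico),
        hB _ (subset_refl _) measurableSet_Ico]
      simp only [Real.volume_Ico, sub_zero, ENNReal.ofReal_one, mul_one]
      ring
    · -- degenerate case: the event has probability zero
      have hempty : (fun ω => ⌊N * X ω⌋) ⁻¹' {k} = ∅ := by
        ext ω
        simp only [mem_preimage, mem_singleton_iff, mem_empty_iff_false, iff_false]
        intro h
        have h0 : 0 ≤ N * X ω := mul_nonneg hN0.le (hXrange ω).1
        have h1 : N * X ω < N := by
          have := (hXrange ω).2
          nlinarith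
        have hk0 : 0 ≤ k := h ▸ Int.floor_nonneg.2 h0
        have hkN : k < (q : ℤ) ^ n := by
          rw [← h, Int.floor_lt]
          push_cast
          exact h1
        exact hk ⟨hk0, hkN⟩
      rw [hempty]
      simp
  -- measurability of the floor events
  have hEkm : ∀ k : ℤ, MeasurableSet ((fun ω => ⌊N * X ω⌋) ⁻¹' {k}) := by
    intro k
    rw [hEk]
    exact hX (hψmeas k measurableSet_Ico)
  -- uniformity of fract (N * X)
  have huniform : ∀ t : Set ℝ, MeasurableSet t →
      ℙ ((fun ω => Int.fract (N * X ω)) ⁻¹' t) = volume (t ∩ Ico 0 1) := by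
    intro t ht
    have hdecomp : (fun ω => Int.fract (N * X ω)) ⁻¹' t =
        ⋃ k : ℤ, ((fun ω => ⌊N * X ω⌋) ⁻¹' {k} ∩ (fun ω => Int.fract (N * X ω)) ⁻¹' t) := by
      ext ω
      simp only [mem_preimage, mem_iUnion, mem_inter_iff, mem_singleton_iff]
      exact ⟨fun h => ⟨⌊N * X ω⌋, rfl, h⟩, fun ⟨k, _, h⟩ => h⟩
    have hdisj : Pairwise (Function.onFun Disjoint fun k : ℤ =>
        (fun ω => ⌊N * X ω⌋) ⁻¹' {k} ∩ (fun ω => Int.fract (N * X ω)) ⁻¹' t) := by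
      intro i j hij
      refine Disjoint.mono inter_subset_left inter_subset_left ?_
      rw [disjoint_left]
      intro ω hi hj
      exact hij (by rw [← hi, ← hj])
    have hGm : MeasurableSet ((fun ω => Int.fract (N * X ω)) ⁻¹' t) :=
      ((measurable_fract.comp ((measurable_const_mul N).comp hX)) ht)
    rw [hdecomp, measure_iUnion hdisj fun k => (hEkm k).inter hGm]
    have h1 : ∀ k : ℤ,
        ℙ ((fun ω => ⌊N * X ω⌋) ⁻¹' {k} ∩ (fun ω => Int.fract (N * X ω)) ⁻¹' t)
          = ℙ ((fun ω => ⌊N * X ω⌋) ⁻¹' {k}) * volume (t ∩ Ico 0 1) :=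
      fun k => key k t ht
    rw [tsum_congr h1, ENNReal.tsum_mul_right]
    have htotal : (∑' k : ℤ, ℙ ((fun ω => ⌊N * X ω⌋) ⁻¹' {k})) = 1 := by
      have huniv : (⋃ k : ℤ, (fun ω => ⌊N * X ω⌋) ⁻¹' {k}) = univ := by
        ext ω
        simp only [mem_iUnion, mem_preimage, mem_singleton_iff, mem_univ, iff_true]
        exact ⟨⌊N * X ω⌋, rfl⟩
      rw [← measure_iUnion (fun i j hij => by
          rw [Function.onFun, disjoint_left]
          intro ω hi hj
          exact hij (by simp only [mem_preimage, mem_singleton_iff] at hi hj; rw [← hi, ← hj]))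
        hEkm, huniv, measure_univ]
    rw [htotal, one_mul]
  -- wrap up
  have hgmeas : Measurable (fun ω => Int.fract (N * X ω)) :=
    measurable_fract.comp ((measurable_const_mul N).comp hX)
  constructor
  · rw [hfract]
    rw [ProbabilityTheory.indepFun_iff_measure_inter_preimage_eq_mul]
    intro s t _ ht
    have hsdecomp : (fun ω => ⌊N * X ω⌋) ⁻¹' s = ⋃ k ∈ s, (fun ω => ⌊N * X ω⌋) ⁻¹' {k} :=
      (Set.biUnion_preimage_singleton _ s).symm
    have hscount : s.Countable := s.to_countable
    have hdisj := Set.pairwiseDisjoint_fiber (fun ω => ⌊N * X ω⌋) s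
    rw [hsdecomp, iUnion₂_inter,
      measure_biUnion hscount (hdisj.mono_on fun k _ => inter_subset_left)
        (fun k _ => (hEkm k).inter (hgmeas ht)),
      measure_biUnion hscount hdisj (fun k _ => hEkm k)]
    calc (∑' k : s, ℙ ((fun ω => ⌊N * X ω⌋) ⁻¹' {(k:ℤ)} ∩
            (fun ω => Int.fract (N * X ω)) ⁻¹' t))
        = ∑' k : s, ℙ ((fun ω => ⌊N * X ω⌋) ⁻¹' {(k:ℤ)}) * volume (t ∩ Ico 0 1) :=
          tsum_congr fun k => key k t ht
      _ = (∑' k : s, ℙ ((fun ω => ⌊N * X ω⌋) ⁻¹' {(k:ℤ)})) * volume (t ∩ Ico 0 1) :=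
          ENNReal.tsum_mul_right
      _ = (∑' k : s, ℙ ((fun ω => ⌊N * X ω⌋) ⁻¹' {(k:ℤ)})) *
            ℙ ((fun ω => Int.fract (N * X ω)) ⁻¹' t) := by rw [huniform t ht]
  · rw [hfract]
    refine Measure.ext fun t ht => ?_
    rw [Measure.map_apply hgmeas ht, huniform t ht, Measure.restrict_apply ht]
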